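/- For n ≥ 2, n ≠ 3, the only Ad(SO(n))-invariant complement of so(n) in so(n+1) is the orthogonal complement of so(n) with respect to the Killing form of so(n+1); i.e., the reductive decomposition of the homogeneous sphere SO(n+1)/SO(n) is unique. -/

import Mathlib

open Matrix

/-- The space `so(m)` of skew-symmetric real `m × m` matrices. -/
def soMat (m : ℕ) : Submodule ℝ (Matrix (Fin m) (Fin m) ℝ) where
  carrier := {A | Aᵀ = -A}
  add_mem' := by
    intro A B hA hB
    simp only [Set.mem_setOf_eq] at *
    rw [Matrix.transpose_add, hA, hB, neg_add]
  zero_mem' := by simp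
  smul_mem' := by
    intro c A hA
    simp only [Set.mem_setOf_eq] at *
    rw [Matrix.transpose_smul, hA, smul_neg]

/-- Evaluation of a matrix on the first standard basis vector, as a linear map. -/
def evalFirst (n : ℕ) : Matrix (Fin (n + 1)) (Fin (n + 1)) ℝ →ₗ[ℝ] (Fin (n + 1) → ℝ) where
  toFun A := A.mulVec (Pi.single 0 1)
  map_add' A B := by funext i; simp [Matrix.add_mulVec]
  map_smul' c A := by funext i; simp [Matrix.smul_mulVec]

namespace Stmt11Aux

variable {n : ℕ}

lemma mem_soMat {m : ℕ} {A : Matrix (Fin m) (Fin m) ℝ} : A ∈ soMat m ↔ Aᵀ = -A := Iff.rfl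

lemma evalFirst_apply (A : Matrix (Fin (n+1)) (Fin (n+1)) ℝ) :
    evalFirst n A = fun i => A i 0 := by
  show A *ᵥ Pi.single 0 1 = _
  simp [Matrix.mulVec_single]
  rfl

lemma mem_ker_iff (A : Matrix (Fin (n+1)) (Fin (n+1)) ℝ) :
    A ∈ LinearMap.ker (evalFirst n) ↔ ∀ i, A i 0 = 0 := by
  rw [LinearMap.mem_ker, evalFirst_apply, funext_iff]
  simp

/-- standard skew generator `E_ab - E_ba`. -/
def Hm (a b : Fin (n+1)) : Matrix (Fin (n+1)) (Fin (n+1)) ℝ :=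
  Matrix.single a b 1 - Matrix.single b a 1

/-- element of the standard complement with first column `v`. -/
def Xv (v : Fin (n+1) → ℝ) : Matrix (Fin (n+1)) (Fin (n+1)) ℝ :=
  Matrix.of fun i j => (if j = 0 then v i else 0) - (if i = 0 then v j else 0)

lemma Xv_apply (v : Fin (n+1) → ℝ) (i j : Fin (n+1)) :
    Xv v i j = (if j = 0 then v i else 0) - (if i = 0 then v j else 0) := rfl

lemma Xv_skew (v : Fin (n+1) → ℝ) : (Xv v)ᵀ = -(Xv v) := by
  ext i j
  simp only [Matrix.transpose_apply, Matrix.neg_apply, Xv_apply]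
  ring

lemma Xv_mem_so (v : Fin (n+1) → ℝ) : Xv v ∈ soMat (n+1) := Xv_skew v

lemma Xv_col (v : Fin (n+1) → ℝ) (hv : v 0 = 0) (i : Fin (n+1)) : Xv v i 0 = v i := by
  rcases eq_or_ne i 0 with rfl | hi <;> simp [Xv_apply, hv, *]

lemma Xv_single_zero : Xv (Pi.single (0 : Fin (n+1)) (1:ℝ)) = 0 := by
  ext i j
  simp only [Xv_apply, Pi.single_apply, Matrix.zero_apply]
  by_cases hi : i = 0 <;> by_cases hj : j = 0 <;> simp [hi, hj]

lemma Xv_sum (v : Fin (n+1) → ℝ) :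
    Xv v = ∑ k : Fin (n+1), v k • Xv (Pi.single k 1) := by
  ext i j
  rw [Matrix.sum_apply]
  simp only [Matrix.smul_apply, Xv_apply, Pi.single_apply, smul_eq_mul]
  rcases eq_or_ne j 0 with rfl | hj <;> rcases eq_or_ne i 0 with rfl | hi <;>
    simp [*, Finset.sum_sub_distrib, mul_ite, Finset.sum_ite_eq', sub_eq_zero]

lemma HmMul_apply (a b : Fin (n+1)) (M : Matrix (Fin (n+1)) (Fin (n+1)) ℝ) (i j : Fin (n+1)) :
    (Hm a b * M) i j = (if i = a then M b j else 0) - (if i = b then M a j else 0) := by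
  rcases eq_or_ne i a with rfl | hia <;> rcases eq_or_ne i b with rfl | hib <;>
    simp [Hm, sub_mul, Matrix.sub_apply, Matrix.single_mul_apply_same, Matrix.single_mul_apply_of_ne, *]

lemma mulHm_apply (a b : Fin (n+1)) (M : Matrix (Fin (n+1)) (Fin (n+1)) ℝ) (i j : Fin (n+1)) :
    (M * Hm a b) i j = (if j = b then M i a else 0) - (if j = a then M i b else 0) := by
  rcases eq_or_ne j a with rfl | hja <;> rcases eq_or_ne j b with rfl | hjb <;>
    simp [Hm, mul_sub, Matrix.sub_apply, Matrix.mul_single_apply_same, Matrix.mul_single_apply_of_ne, *]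

lemma Hm_mem (a b : Fin (n+1)) (ha : a ≠ 0) (hb : b ≠ 0) :
    Hm a b ∈ soMat (n+1) ⊓ LinearMap.ker (evalFirst n) := by
  rw [Submodule.mem_inf]
  constructor
  · rw [mem_soMat]
    ext i j
    simp only [Matrix.transpose_apply, Matrix.neg_apply, Hm, Matrix.sub_apply,
      Matrix.single, Matrix.of_apply]
    by_cases h1 : a = i ∧ b = j <;> by_cases h2 : b = i ∧ a = j <;>
      simp [h1, h2, and_comm] <;> tauto
  · rw [mem_ker_iff]
    intro i
    simp only [Hm, Matrix.sub_apply]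
    rw [Matrix.single_apply_of_col_ne a i hb,
      Matrix.single_apply_of_col_ne b i ha, sub_zero]

end Stmt11Aux

open Stmt11Aux

/-- For `n ≥ 2`, `n ≠ 3`, the only `Ad(SO(n))`-invariant (equivalently,
`ad(so(n))`-invariant) complement of `so(n)` in `so(n+1)` is the orthogonal complement of
`so(n)` with respect to the Killing form (equivalently, the trace form) of `so(n+1)`;
i.e. the reductive decomposition of the homogeneous sphere `SO(n+1)/SO(n)` is unique.
Here `so(n) ⊂ so(n+1)` is realized as `𝔥 = {A ∈ so(n+1) : A e₀ = 0}`, the stabilizer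
subalgebra of the first basis vector. -/
theorem stmt11 (n : ℕ) (hn : 2 ≤ n) (hn3 : n ≠ 3)
    (𝔪 : Submodule ℝ (Matrix (Fin (n + 1)) (Fin (n + 1)) ℝ))
    (hsub : 𝔪 ≤ soMat (n + 1))
    (hdisj : (soMat (n + 1) ⊓ LinearMap.ker (evalFirst n)) ⊓ 𝔪 = ⊥)
    (hsum : (soMat (n + 1) ⊓ LinearMap.ker (evalFirst n)) ⊔ 𝔪 = soMat (n + 1))
    (hinv : ∀ H ∈ soMat (n + 1) ⊓ LinearMap.ker (evalFirst n),
      ∀ X ∈ 𝔪, H * X - X * H ∈ 𝔪) :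
    (𝔪 : Set (Matrix (Fin (n + 1)) (Fin (n + 1)) ℝ))
      = {A | A ∈ soMat (n + 1) ∧
          ∀ H ∈ soMat (n + 1) ⊓ LinearMap.ker (evalFirst n), (A * H).trace = 0} := by
  classical
  -- skew-symmetry entries
  have hskew : ∀ M : Matrix (Fin (n+1)) (Fin (n+1)) ℝ, Mᵀ = -M →
      ∀ i j, M j i = - M i j := by
    intro M hM i j
    have := congrFun (congrFun hM i) j
    simpa using this
  have hdiag : ∀ M : Matrix (Fin (n+1)) (Fin (n+1)) ℝ, Mᵀ = -M →
      ∀ i, M i i = 0 := by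
    intro M hM i
    have := hskew M hM i i
    linarith
  -- injectivity of evalFirst on 𝔪
  have inj : ∀ M ∈ 𝔪, (∀ i, M i 0 = 0) → M = 0 := by
    intro M hM h0
    have hmem : M ∈ (soMat (n + 1) ⊓ LinearMap.ker (evalFirst n)) ⊓ 𝔪 :=
      ⟨⟨hsub hM, (mem_ker_iff M).2 h0⟩, hM⟩
    rw [hdisj] at hmem
    simpa using hmem
  -- surjectivity of evalFirst on 𝔪
  have surj : ∀ v : Fin (n+1) → ℝ, v 0 = 0 → ∃ M ∈ 𝔪, ∀ i, M i 0 = v i := by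
    intro v hv
    have hXso : Xv v ∈ soMat (n + 1) := Xv_mem_so v
    rw [← hsum] at hXso
    obtain ⟨H, hH, M, hM, hHM⟩ := Submodule.mem_sup.1 hXso
    refine ⟨M, hM, fun i => ?_⟩
    have hH0 : H i 0 = 0 := (mem_ker_iff H).1 hH.2 i
    have := congrFun (congrFun hHM i) 0
    rw [Matrix.add_apply, hH0, zero_add] at this
    rw [this, Xv_col v hv]
  -- a skew matrix with zero interior is Xv of its first column
  have ext_eq : ∀ M : Matrix (Fin (n+1)) (Fin (n+1)) ℝ, Mᵀ = -M →
      (∀ p q, p ≠ 0 → q ≠ 0 → M p q = 0) → M = Xv (fun i => M i 0) := by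
    intro M hMs hint
    ext i j
    rcases eq_or_ne j 0 with rfl | hj
    · rcases eq_or_ne i 0 with rfl | hi
      · simp [Xv_apply, hdiag M hMs 0]
      · simp [Xv_apply, hi]
    · rcases eq_or_ne i 0 with rfl | hi
      · rw [Xv_apply]
        rw [if_neg hj, if_pos rfl, hskew M hMs j 0, zero_sub]
      · rw [hint i j hi hj, Xv_apply, if_neg hj, if_neg hi, sub_zero]
  -- the key step, done separately for n = 2 and n ≥ 4
  have intcore : ∀ k : Fin (n+1), k ≠ 0 → ∀ M ∈ 𝔪, (∀ i, M i 0 = (Pi.single k 1 : Fin (n+1) → ℝ) i) →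
      ∀ p q, p ≠ 0 → q ≠ 0 → M p q = 0 := by
    rcases Nat.lt_or_ge n 4 with h4 | h4
    · -- low-dimensional cases: n = 2 (n = 3 is excluded)
      interval_cases n
      · -- n = 2 : use the double commutator with Hm 1 2
        intro k hk M hM hcol p q hp hq
        have hsk := hskew M (hsub hM)
        have h00 := hdiag M (hsub hM) 0
        have hHm := Hm_mem (n := 2) 1 2 (by decide) (by decide)
        have hC : Hm 1 2 * M - M * Hm 1 2 ∈ 𝔪 := hinv _ hHm _ hM
        have hN : Hm 1 2 * (Hm 1 2 * M - M * Hm 1 2)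
            - (Hm 1 2 * M - M * Hm 1 2) * Hm 1 2 ∈ 𝔪 := hinv _ hHm _ hC
        have hz : M + (Hm 1 2 * (Hm 1 2 * M - M * Hm 1 2)
            - (Hm 1 2 * M - M * Hm 1 2) * Hm 1 2) = 0 := by
          apply inj _ (add_mem hM hN)
          intro i
          fin_cases i <;>
            simp [Matrix.add_apply, Matrix.sub_apply, HmMul_apply, mulHm_apply, h00]
        have h12 : M 1 2 = 0 := by
          have e := congrFun (congrFun hz 1) 2
          simp only [Matrix.add_apply, Matrix.sub_apply, HmMul_apply, mulHm_apply,
            Matrix.zero_apply] at e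
          simp only [if_neg (by decide : ¬ ((2:Fin (2+1)) = 1)),
            if_neg (by decide : ¬ ((1:Fin (2+1)) = 2))] at e
          norm_num at e
          have e1 := hsk 1 2
          linarith
        fin_cases p <;> fin_cases q <;>
          first
            | exact absurd rfl hp
            | exact absurd rfl hq
            | exact hdiag M (hsub hM) _
            | exact h12
            | exact (hsk 1 2).trans (by rw [h12]; exact neg_zero)
      · exact absurd rfl hn3
    · -- n ≥ 4
      intro k hk M hM hcol p q hp hq
      have hsk := hskew M (hsub hM)
      have main : ∀ p q : Fin (n+1), p ≠ 0 → q ≠ 0 → q ≠ p → p ≠ k → M p q = 0 := by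
        intro p q hp hq hqp hpk
        obtain ⟨a, ha0, hap, haq, hak⟩ : ∃ a : Fin (n+1), a ≠ 0 ∧ a ≠ p ∧ a ≠ q ∧ a ≠ k := by
          have hcard : ({0, p, q, k} : Finset (Fin (n+1))).card ≤ 4 := by
            have h1 := Finset.card_insert_le (0 : Fin (n+1)) ({p, q, k} : Finset (Fin (n+1)))
            have h2 := Finset.card_insert_le p ({q, k} : Finset (Fin (n+1)))
            have h3 := Finset.card_insert_le q ({k} : Finset (Fin (n+1)))
            have h4' : ({k} : Finset (Fin (n+1))).card = 1 := Finset.card_singleton k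
            omega
          have hpos : (0:ℕ) < (({0, p, q, k} : Finset (Fin (n+1)))ᶜ).card := by
            rw [Finset.card_compl, Fintype.card_fin]
            omega
          obtain ⟨a, ha⟩ := Finset.card_pos.1 hpos
          rw [Finset.mem_compl] at ha
          simp only [Finset.mem_insert, Finset.mem_singleton] at ha
          push_neg at ha
          exact ⟨a, ha.1, ha.2.1, ha.2.2.1, ha.2.2.2⟩
        have hCm : Hm a p * M - M * Hm a p ∈ 𝔪 := hinv _ (Hm_mem a p ha0 hp) _ hM
        have hC0 : Hm a p * M - M * Hm a p = 0 := by
          apply inj _ hCm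
          intro i
          have e1 : (Hm a p * M) i 0 = 0 := by
            rw [HmMul_apply, hcol p, hcol a,
              Pi.single_eq_of_ne hpk, Pi.single_eq_of_ne hak]
            simp
          have e2 : (M * Hm a p) i 0 = 0 := by
            rw [mulHm_apply, if_neg (Ne.symm hp), if_neg (Ne.symm ha0), sub_zero]
          rw [Matrix.sub_apply, e1, e2, sub_zero]
        have e := congrFun (congrFun hC0 a) q
        rw [Matrix.sub_apply, HmMul_apply, mulHm_apply, Matrix.zero_apply,
          if_pos rfl, if_neg hap, if_neg hqp, if_neg (Ne.symm haq)] at e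
        simpa using e
      rcases eq_or_ne p q with rfl | hpq
      · exact hdiag M (hsub hM) p
      rcases eq_or_ne p k with rfl | hpk
      · rw [hsk q p, main q p hq hp hpq (Ne.symm hpq), neg_zero]
      · exact main p q hp hq (Ne.symm hpq) hpk
  -- the standard complement is contained in 𝔪
  have hsingle : ∀ k : Fin (n+1), Xv (Pi.single k 1) ∈ 𝔪 := by
    intro k
    rcases eq_or_ne k 0 with rfl | hk
    · rw [Xv_single_zero]; exact zero_mem 𝔪
    · obtain ⟨M, hM, hcol⟩ := surj (Pi.single k 1) (by simp [Pi.single_eq_of_ne, Ne.symm hk])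
      have hMeq := ext_eq M (hsub hM) (intcore k hk M hM hcol)
      have hfe : (fun i => M i 0) = Pi.single k 1 := funext hcol
      rw [hfe] at hMeq
      rwa [← hMeq]
  have Xmem : ∀ v : Fin (n+1) → ℝ, Xv v ∈ 𝔪 := by
    intro v
    rw [Xv_sum v]
    exact Submodule.sum_mem _ fun k _ => Submodule.smul_mem _ _ (hsingle k)
  -- every element of 𝔪 is standard
  have rep : ∀ M ∈ 𝔪, M = Xv (fun i => M i 0) := by
    intro M hM
    have h00 : M 0 0 = 0 := hdiag M (hsub hM) 0
    have hd : M - Xv (fun i => M i 0) ∈ 𝔪 := sub_mem hM (Xmem _)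
    have hz : M - Xv (fun i => M i 0) = 0 := by
      apply inj _ hd
      intro i
      rw [Matrix.sub_apply, Xv_col (fun i => M i 0) h00, sub_self]
    exact sub_eq_zero.1 hz
  -- now the set equality
  ext A
  simp only [SetLike.mem_coe, Set.mem_setOf_eq]
  constructor
  · intro hA
    have hint : ∀ p q : Fin (n+1), p ≠ 0 → q ≠ 0 → A p q = 0 := by
      intro p q hp hq
      rw [rep A hA, Xv_apply, if_neg hq, if_neg hp, sub_zero]
    refine ⟨hsub hA, fun H hH => ?_⟩
    have hH0 : ∀ i, H i 0 = 0 := (mem_ker_iff H).1 hH.2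
    have hH0' : ∀ i, H 0 i = 0 := by
      intro i
      rw [hskew H hH.1 i 0, hH0 i, neg_zero]
    rw [Matrix.trace]
    apply Finset.sum_eq_zero
    intro i _
    rw [Matrix.diag_apply, Matrix.mul_apply]
    apply Finset.sum_eq_zero
    intro j _
    rcases eq_or_ne j 0 with rfl | hj
    · rw [hH0' i, mul_zero]
    · rcases eq_or_ne i 0 with rfl | hi
      · rw [hH0 j, mul_zero]
      · rw [hint i j hi hj, zero_mul]
  · rintro ⟨hAso, htr⟩
    have hint : ∀ p q : Fin (n+1), p ≠ 0 → q ≠ 0 → A p q = 0 := by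
      intro p q hp hq
      rcases eq_or_ne p q with rfl | hpq
      · exact hdiag A hAso p
      · have h0 := htr (Hm p q) (Hm_mem p q hp hq)
        rw [Matrix.trace] at h0
        have hsum' : ∀ i : Fin (n+1), (A * Hm p q).diag i
            = (if i = q then A i p else 0) - (if i = p then A i q else 0) := by
          intro i
          rw [Matrix.diag_apply, mulHm_apply]
        rw [Finset.sum_congr rfl (fun i _ => hsum' i), Finset.sum_sub_distrib,
          Finset.sum_ite_eq' Finset.univ q (fun i => A i p),
          Finset.sum_ite_eq' Finset.univ p (fun i => A i q)] at h0
        simp only [Finset.mem_univ, if_pos] at h0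
        have := hskew A hAso p q
        linarith
    have hAeq := ext_eq A hAso hint
    rw [hAeq]
    exact Xmem _
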